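/- (Theorems 4 and 5, combined form.) Let N be a finite set of voters, 𝒞 an M-winning coalition set on N, and S = (S_1,…,S_K) a sequence of nonempty, pairwise distinct subsets of N with S_K a singleton. Suppose the M-winning coalition rule associated with 𝒞 and the sequential unanimity rule associated with S agree at every strict profile R : N → Bool. Then for every neutral and strategy-proof full-domain rule f and every full profile R̃ : N → Option Bool, 𝒞^f R̃ = 𝒮^f R̃. -/
import Mathlib


/-- A rule is strategy-proof if whenever a voter's misreport would give his true
preference, truthful reporting gives it as well. -/
def StrategyProof {N : Type*} [DecidableEq N] (f : (N → Bool) → Bool) : Prop :=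
  ∀ (R : N → Bool) (i : N) (b : Bool), f (Function.update R i b) = R i → f R = R i

/-- A rule is neutral if it commutes with flipping the two candidates. -/
def Neutral {N : Type*} (f : (N → Bool) → Bool) : Prop :=
  ∀ R : N → Bool, f (fun i => !(R i)) = !(f R)

/-- An M-winning coalition set: nonempty, members nonempty, minimality (P1),
and Moulin's property (P2). -/
def IsMWCS {N : Type*} [DecidableEq N] (𝒞 : Set (Finset N)) : Prop :=
  𝒞.Nonempty ∧ (∀ C ∈ 𝒞, C.Nonempty) ∧
    (∀ C ∈ 𝒞, ∀ C' ∈ 𝒞, C ⊆ C' → C = C') ∧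
    (∀ C : Finset N, (∃ C' ∈ 𝒞, C' ⊆ C) ↔ ∀ C'' ∈ 𝒞, (C ∩ C'').Nonempty)

/-- `f` is the M-winning coalition rule associated with `𝒞`. -/
def IsMWCRule {N : Type*} (𝒞 : Set (Finset N)) (f : (N → Bool) → Bool) : Prop :=
  ∀ (R : N → Bool) (x : Bool), f R = x ↔ ∃ C ∈ 𝒞, ∀ i ∈ C, R i = x

/-- `g` is the sequential unanimity rule associated with the sequence `S`. -/
def IsSURule {N : Type*} {K : ℕ} (S : Fin K → Finset N) (g : (N → Bool) → Bool) : Prop :=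
  ∀ (R : N → Bool) (x : Bool),
    g R = x ↔ ∃ k : Fin K, (∀ i ∈ S k, R i = x) ∧
      ∀ l < k, ∃ i ∈ S l, ∃ j ∈ S l, R i ≠ R j

/-- A full-domain rule is neutral if it commutes with flipping the two candidates
(indifference/ties are mapped to themselves). -/
def FullNeutral {N : Type*} (g : (N → Option Bool) → Option Bool) : Prop :=
  ∀ R : N → Option Bool, g (fun i => Option.map not (R i)) = Option.map not (g R)

/-- The ranking of outcomes by a voter with strict preference for `x`:
`some x ≻ none ≻ some (!x)`. -/
def rankOutcome (x : Bool) : Option Bool → ℕ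
  | none => 1
  | some y => if y = x then 2 else 0

/-- A full-domain rule is strategy-proof if no voter with a strict preference can
obtain a strictly better-ranked outcome by misreporting. -/
def FullStrategyProof {N : Type*} [DecidableEq N]
    (g : (N → Option Bool) → Option Bool) : Prop :=
  ∀ (R : N → Option Bool) (i : N) (x : Bool), R i = some x →
    ∀ r : Option Bool, rankOutcome x (g (Function.update R i r)) ≤ rankOutcome x (g R)

/-- `g` is the M-winning coalition rule with default `f` associated with `𝒞`. -/
def IsMWCFullRule {N : Type*} (𝒞 : Set (Finset N))
    (f g : (N → Option Bool) → Option Bool) : Prop :=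
  ∀ R : N → Option Bool,
    (∀ x : Bool, (∃ C ∈ 𝒞, ∀ i ∈ C, R i = some x) → g R = some x) ∧
    ((¬ ∃ x : Bool, ∃ C ∈ 𝒞, ∀ i ∈ C, R i = some x) → g R = f R)

/-- `g` is the sequential unanimity rule with default `f` associated with `S`. -/
def IsSUFullRule {N : Type*} {K : ℕ} (S : Fin K → Finset N)
    (f g : (N → Option Bool) → Option Bool) : Prop :=
  ∀ R : N → Option Bool,
    (∀ x : Bool, (∃ k : Fin K, (∀ i ∈ S k, R i = some x) ∧
        ∀ l < k, ∃ i ∈ S l, R i = some x) → g R = some x) ∧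
    ((¬ ∃ x : Bool, ∃ k : Fin K, (∀ i ∈ S k, R i = some x) ∧
        ∀ l < k, ∃ i ∈ S l, R i = some x) → g R = f R)

/-- Theorems 4 and 5 (combined form): if the M-winning coalition rule associated with 𝒞
and the sequential unanimity rule associated with S agree at every strict profile, then
for every neutral and strategy-proof full-domain default f, the rules 𝒞^f and 𝒮^f agree
at every full profile. -/
theorem stmt15 {N : Type*} [Fintype N] [DecidableEq N] {K : ℕ}
    (𝒞 : Set (Finset N)) (h𝒞 : IsMWCS 𝒞)
    (S : Fin (K + 1) → Finset N) (hne : ∀ k, (S k).Nonempty)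
    (hinj : Function.Injective S) (hlast : (S (Fin.last K)).card = 1)
    (f0 g0 : (N → Bool) → Bool) (hf0 : IsMWCRule 𝒞 f0) (hg0 : IsSURule S g0)
    (hagree : ∀ R : N → Bool, f0 R = g0 R)
    (f : (N → Option Bool) → Option Bool)
    (hfN : FullNeutral f) (hfSP : FullStrategyProof f)
    (g g' : (N → Option Bool) → Option Bool)
    (hg : IsMWCFullRule 𝒞 f g) (hg' : IsSUFullRule S f g')
    (R : N → Option Bool) : g R = g' R := by
  classical
  have key : ∀ x : Bool, (∃ C ∈ 𝒞, ∀ i ∈ C, R i = some x) ↔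
      (∃ k : Fin (K + 1), (∀ i ∈ S k, R i = some x) ∧
        ∀ l < k, ∃ i ∈ S l, R i = some x) := by
    intro x
    set Rx : N → Bool := fun i => if R i = some x then x else !x with hRx
    have hRxiff : ∀ i, Rx i = x ↔ R i = some x := by
      intro i; simp only [hRx]
      by_cases h : R i = some x <;> simp [h]
    constructor
    · rintro ⟨C, hC, hCx⟩
      have hf : f0 Rx = x := (hf0 Rx x).2 ⟨C, hC, fun i hi => (hRxiff i).2 (hCx i hi)⟩
      have hgx : g0 Rx = x := (hagree Rx) ▸ hf
      obtain ⟨k, hk1, hk2⟩ := (hg0 Rx x).1 hgx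
      refine ⟨k, fun i hi => (hRxiff i).1 (hk1 i hi), fun l hl => ?_⟩
      obtain ⟨i, hi, j, hj, hij⟩ := hk2 l hl
      by_cases h : Rx i = x
      · exact ⟨i, hi, (hRxiff i).1 h⟩
      · have hjx : Rx j = x := by
          revert hij h; cases hxi : Rx i <;> cases hxj : Rx j <;> cases x <;> simp
        exact ⟨j, hj, (hRxiff j).1 hjx⟩
    · rintro ⟨k, hk1, hk2⟩
      obtain ⟨m, hm, hmin⟩ := (wellFounded_lt (α := Fin (K + 1))).has_min
        {k | ∀ i ∈ S k, R i = some x} ⟨k, hk1⟩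
      have hmk : m ≤ k := not_lt.1 (hmin k hk1)
      have hgx : g0 Rx = x := by
        refine (hg0 Rx x).2 ⟨m, fun i hi => (hRxiff i).2 (hm i hi), fun l hl => ?_⟩
        obtain ⟨i, hi, hix⟩ := hk2 l (lt_of_lt_of_le hl hmk)
        have : ¬ ∀ i ∈ S l, R i = some x := fun h => hmin l h hl
        push_neg at this
        obtain ⟨j, hj, hjx⟩ := this
        refine ⟨i, hi, j, hj, ?_⟩
        have h1 : Rx i = x := (hRxiff i).2 hix
        have h2 : Rx j ≠ x := fun h => hjx ((hRxiff j).1 h)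
        exact fun h => h2 (h ▸ h1)
      have hf : f0 Rx = x := (hagree Rx).symm ▸ hgx
      obtain ⟨C, hC, hCx⟩ := (hf0 Rx x).1 hf
      exact ⟨C, hC, fun i hi => (hRxiff i).1 (hCx i hi)⟩
  by_cases h : ∃ x : Bool, ∃ C ∈ 𝒞, ∀ i ∈ C, R i = some x
  · obtain ⟨x, hx⟩ := h
    rw [(hg R).1 x hx, (hg' R).1 x ((key x).1 hx)]
  · have h' : ¬ ∃ x : Bool, ∃ k : Fin (K + 1), (∀ i ∈ S k, R i = some x) ∧
        ∀ l < k, ∃ i ∈ S l, R i = some x := by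
      rintro ⟨x, hk⟩; exact h ⟨x, (key x).2 hk⟩
    rw [(hg R).2 h, (hg' R).2 h']
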